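/- Let η > 0, λ ≥ 0 with η·λ ≤ 1, and κ > 0. Let W₀, W₀', M, M' be real m×n matrices, U, U' real m×r matrices with ‖U‖₂ ≤ 1, and V, V' real n×r matrices with ‖V'‖₂ ≤ 1, and suppose ‖U − U'‖_F + ‖V − V'‖_F ≤ (2√2/κ)·‖M − M'‖_F. Define W = (1 − ηλ)·W₀ − η·U·Vᵀ and W' = (1 − ηλ)·W₀' − η·U'·(V')ᵀ. Then ‖W − W'‖_F ≤ (1 − ηλ)·‖W₀ − W₀'‖_F + (2√2·η/κ)·‖M − M'‖_F. -/

import Mathlib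

open Matrix

/-- Frobenius norm of a real matrix: `√ tr(Aᵀ A)`. -/
noncomputable def frobNorm {m n : ℕ} (A : Matrix (Fin m) (Fin n) ℝ) : ℝ :=
  Real.sqrt ((Aᵀ * A).trace)

/-- Spectral norm of a real matrix: the operator norm induced by Euclidean norms. -/
noncomputable def specNorm {m n : ℕ} (A : Matrix (Fin m) (Fin n) ℝ) : ℝ :=
  ‖LinearMap.toContinuousLinearMap (Matrix.toEuclideanLin A)‖

namespace MuonAux

noncomputable def toEuc {m n : ℕ} (A : Matrix (Fin m) (Fin n) ℝ) :
    EuclideanSpace ℝ (Fin m × Fin n) :=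
  (WithLp.equiv 2 _).symm (fun p => A p.1 p.2)

lemma trace_eq {m n : ℕ} (A : Matrix (Fin m) (Fin n) ℝ) :
    (Aᵀ * A).trace = ∑ j, ∑ i, A i j ^ 2 := by
  simp [Matrix.trace, Matrix.diag, Matrix.mul_apply, sq]

lemma frobNorm_eq {m n : ℕ} (A : Matrix (Fin m) (Fin n) ℝ) :
    frobNorm A = ‖toEuc A‖ := by
  rw [frobNorm, trace_eq, EuclideanSpace.norm_eq]
  congr 1
  rw [Fintype.sum_prod_type, Finset.sum_comm]
  simp [toEuc, Real.norm_eq_abs, sq_abs]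

lemma frobNorm_nonneg {m n : ℕ} (A : Matrix (Fin m) (Fin n) ℝ) : 0 ≤ frobNorm A :=
  Real.sqrt_nonneg _

lemma toEuc_add {m n : ℕ} (A B : Matrix (Fin m) (Fin n) ℝ) :
    toEuc (A + B) = toEuc A + toEuc B := rfl

lemma toEuc_smul {m n : ℕ} (c : ℝ) (A : Matrix (Fin m) (Fin n) ℝ) :
    toEuc (c • A) = c • toEuc A := rfl

lemma frobNorm_add_le {m n : ℕ} (A B : Matrix (Fin m) (Fin n) ℝ) :
    frobNorm (A + B) ≤ frobNorm A + frobNorm B := by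
  simp only [frobNorm_eq, toEuc_add]; exact norm_add_le _ _

lemma frobNorm_smul {m n : ℕ} (c : ℝ) (A : Matrix (Fin m) (Fin n) ℝ) :
    frobNorm (c • A) = |c| * frobNorm A := by
  simp only [frobNorm_eq, toEuc_smul, norm_smul, Real.norm_eq_abs]

lemma frobNorm_transpose {m n : ℕ} (A : Matrix (Fin m) (Fin n) ℝ) :
    frobNorm (Aᵀ) = frobNorm A := by
  rw [frobNorm, frobNorm, Matrix.transpose_transpose, Matrix.trace_mul_comm]

lemma specNorm_nonneg {m n : ℕ} (A : Matrix (Fin m) (Fin n) ℝ) : 0 ≤ specNorm A :=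
  norm_nonneg _

open scoped Matrix.Norms.L2Operator in
lemma specNorm_transpose {m n : ℕ} (A : Matrix (Fin m) (Fin n) ℝ) :
    specNorm (Aᵀ) = specNorm A := by
  have h1 : specNorm (Aᵀ) = ‖Aᵀ‖ := rfl
  have h2 : specNorm A = ‖A‖ := rfl
  rw [h1, h2, ← Matrix.conjTranspose_eq_transpose_of_trivial A,
    Matrix.l2_opNorm_conjTranspose]

lemma mulVec_norm_le {m n : ℕ} (A : Matrix (Fin m) (Fin n) ℝ) (x : EuclideanSpace ℝ (Fin n)) :
    ‖(WithLp.equiv 2 (Fin m → ℝ)).symm (A *ᵥ (WithLp.equiv 2 (Fin n → ℝ)) x)‖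
      ≤ specNorm A * ‖x‖ := by
  have := (LinearMap.toContinuousLinearMap (Matrix.toEuclideanLin A)).le_opNorm x
  simpa [specNorm, Matrix.toEuclideanLin_apply] using this

lemma frob_mul_le_spec {m r n : ℕ} (A : Matrix (Fin m) (Fin r) ℝ)
    (B : Matrix (Fin r) (Fin n) ℝ) :
    frobNorm (A * B) ≤ specNorm A * frobNorm B := by
  have key : ((A * B)ᵀ * (A * B)).trace ≤ specNorm A ^ 2 * ((Bᵀ * B).trace) := by
    rw [trace_eq, trace_eq, Finset.mul_sum]
    apply Finset.sum_le_sum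
    intro j _
    set x : EuclideanSpace ℝ (Fin r) := (WithLp.equiv 2 (Fin r → ℝ)).symm (fun k => B k j)
      with hxdef
    have hex : (WithLp.equiv 2 (Fin r → ℝ)) x = fun k => B k j := by
      simp [hxdef]
    have hxn : ‖x‖ ^ 2 = ∑ i, B i j ^ 2 := by
      rw [EuclideanSpace.norm_eq, Real.sq_sqrt (by positivity)]
      simp [hxdef, Real.norm_eq_abs, sq_abs]
    have hyn : ‖(WithLp.equiv 2 (Fin m → ℝ)).symm (A *ᵥ (WithLp.equiv 2 (Fin r → ℝ)) x)‖ ^ 2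
        = ∑ i, (A * B) i j ^ 2 := by
      rw [EuclideanSpace.norm_eq, Real.sq_sqrt (by positivity), hex]
      apply Finset.sum_congr rfl
      intro i _
      simp [Matrix.mul_apply, Matrix.mulVec, dotProduct, Real.norm_eq_abs, sq_abs]
    have hle := mulVec_norm_le A x
    have := mul_self_le_mul_self (norm_nonneg _) hle
    rw [← sq, ← sq] at this
    rw [hyn] at this
    calc ∑ i, (A * B) i j ^ 2 ≤ (specNorm A * ‖x‖) ^ 2 := this
      _ = specNorm A ^ 2 * ∑ i, B i j ^ 2 := by rw [mul_pow, hxn]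
  have h1 : frobNorm (A * B) ≤ Real.sqrt (specNorm A ^ 2 * ((Bᵀ * B).trace)) :=
    Real.sqrt_le_sqrt key
  calc frobNorm (A * B) ≤ Real.sqrt (specNorm A ^ 2 * ((Bᵀ * B).trace)) := h1
    _ = specNorm A * frobNorm B := by
        rw [Real.sqrt_mul (by positivity), Real.sqrt_sq (specNorm_nonneg A)]; rfl

end MuonAux

open MuonAux in
/-- One-step stability contraction of the orthogonalized (Muon) update. -/
theorem stmt_2 {m n r : ℕ} (η lam κ : ℝ) (hη : 0 < η) (hlam : 0 ≤ lam) (hηlam : η * lam ≤ 1)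
    (hκ : 0 < κ)
    (W₀ W₀' M M' : Matrix (Fin m) (Fin n) ℝ)
    (U U' : Matrix (Fin m) (Fin r) ℝ) (V V' : Matrix (Fin n) (Fin r) ℝ)
    (hU : specNorm U ≤ 1) (hV' : specNorm V' ≤ 1)
    (hDK : frobNorm (U - U') + frobNorm (V - V') ≤ (2 * Real.sqrt 2 / κ) * frobNorm (M - M'))
    (W W' : Matrix (Fin m) (Fin n) ℝ)
    (hW : W = (1 - η * lam) • W₀ - η • (U * Vᵀ))
    (hW' : W' = (1 - η * lam) • W₀' - η • (U' * V'ᵀ)) :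
    frobNorm (W - W') ≤
      (1 - η * lam) * frobNorm (W₀ - W₀') + (2 * Real.sqrt 2 * η / κ) * frobNorm (M - M') := by
  subst hW hW'
  have hsplit : ((1 - η * lam) • W₀ - η • (U * Vᵀ)) - ((1 - η * lam) • W₀' - η • (U' * V'ᵀ))
      = (1 - η * lam) • (W₀ - W₀') + (-η) • (U * (V - V')ᵀ + (U - U') * V'ᵀ) := by
    have h1 : U * (V - V')ᵀ + (U - U') * V'ᵀ = U * Vᵀ - U' * V'ᵀ := by
      rw [Matrix.transpose_sub, Matrix.mul_sub, Matrix.sub_mul]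
      abel
    rw [h1, smul_sub, neg_smul, smul_sub]
    abel
  rw [hsplit]
  have h1ml : 0 ≤ 1 - η * lam := by linarith
  have t1 : frobNorm ((1 - η * lam) • (W₀ - W₀') + (-η) • (U * (V - V')ᵀ + (U - U') * V'ᵀ))
      ≤ frobNorm ((1 - η * lam) • (W₀ - W₀'))
        + frobNorm ((-η) • (U * (V - V')ᵀ + (U - U') * V'ᵀ)) := frobNorm_add_le _ _
  have t2 : frobNorm ((1 - η * lam) • (W₀ - W₀')) = (1 - η * lam) * frobNorm (W₀ - W₀') := by
    rw [frobNorm_smul, abs_of_nonneg h1ml]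
  have t3 : frobNorm ((-η) • (U * (V - V')ᵀ + (U - U') * V'ᵀ))
      = η * frobNorm (U * (V - V')ᵀ + (U - U') * V'ᵀ) := by
    rw [frobNorm_smul, abs_neg, abs_of_nonneg hη.le]
  have t4 : frobNorm (U * (V - V')ᵀ + (U - U') * V'ᵀ)
      ≤ frobNorm (U - U') + frobNorm (V - V') := by
    have a1 : frobNorm (U * (V - V')ᵀ) ≤ frobNorm (V - V') := by
      calc frobNorm (U * (V - V')ᵀ) ≤ specNorm U * frobNorm ((V - V')ᵀ) :=
            frob_mul_le_spec _ _
        _ ≤ 1 * frobNorm ((V - V')ᵀ) :=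
            mul_le_mul_of_nonneg_right hU (frobNorm_nonneg _)
        _ = frobNorm (V - V') := by rw [one_mul, frobNorm_transpose]
    have a2 : frobNorm ((U - U') * V'ᵀ) ≤ frobNorm (U - U') := by
      have hT : ((U - U') * V'ᵀ)ᵀ = V' * (U - U')ᵀ := by
        rw [Matrix.transpose_mul, Matrix.transpose_transpose]
      calc frobNorm ((U - U') * V'ᵀ) = frobNorm (V' * (U - U')ᵀ) := by
            rw [← hT, frobNorm_transpose]
        _ ≤ specNorm V' * frobNorm ((U - U')ᵀ) := frob_mul_le_spec _ _
        _ ≤ 1 * frobNorm ((U - U')ᵀ) :=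
            mul_le_mul_of_nonneg_right hV' (frobNorm_nonneg _)
        _ = frobNorm (U - U') := by rw [one_mul, frobNorm_transpose]
    calc frobNorm (U * (V - V')ᵀ + (U - U') * V'ᵀ)
        ≤ frobNorm (U * (V - V')ᵀ) + frobNorm ((U - U') * V'ᵀ) := frobNorm_add_le _ _
      _ ≤ frobNorm (V - V') + frobNorm (U - U') := add_le_add a1 a2
      _ = frobNorm (U - U') + frobNorm (V - V') := by ring
  have t5 : η * frobNorm (U * (V - V')ᵀ + (U - U') * V'ᵀ)
      ≤ (2 * Real.sqrt 2 * η / κ) * frobNorm (M - M') := by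
    have := mul_le_mul_of_nonneg_left (le_trans t4 hDK) hη.le
    calc η * frobNorm (U * (V - V')ᵀ + (U - U') * V'ᵀ)
        ≤ η * ((2 * Real.sqrt 2 / κ) * frobNorm (M - M')) := this
      _ = (2 * Real.sqrt 2 * η / κ) * frobNorm (M - M') := by ring
  calc frobNorm ((1 - η * lam) • (W₀ - W₀') + (-η) • (U * (V - V')ᵀ + (U - U') * V'ᵀ))
      ≤ frobNorm ((1 - η * lam) • (W₀ - W₀'))
        + frobNorm ((-η) • (U * (V - V')ᵀ + (U - U') * V'ᵀ)) := t1
    _ = (1 - η * lam) * frobNorm (W₀ - W₀')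
        + η * frobNorm (U * (V - V')ᵀ + (U - U') * V'ᵀ) := by rw [t2, t3]
    _ ≤ (1 - η * lam) * frobNorm (W₀ - W₀')
        + (2 * Real.sqrt 2 * η / κ) * frobNorm (M - M') := by linarith [t5]
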